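/- Let β ≥ 0, ρ ≥ 0, ε ≥ 0 and Ĉ, C', D' ≥ 0. Let σ' : ℝ → ℝ satisfy |σ'(x)| ≤ β for all x and |σ'(x) − σ'(y)| ≤ ρ|x − y| for all x, y. Let A, A_SG be n×n matrices with ‖A‖ ≤ β, ‖A_SG‖ ≤ β and ‖A_SG − A‖ ≤ ε; let W be a d×d matrix with ‖W‖ ≤ β; let Z, Z_SG be n×d matrices with ‖Z_SG − Z‖ ≤ Ĉ·ε; and let G, G_SG be n×d matrices with ‖G_SG − G‖ ≤ C'·ε, ‖G‖ ≤ D'·β and ‖G_SG‖ ≤ D'·β. Then ‖(σ'(Z_SG)) ⊙ (A_SGᵀ·G_SG·Wᵀ) − (σ'(Z)) ⊙ (Aᵀ·G·Wᵀ)‖ ≤ n·d·β³·((ρ·Ĉ + 1)·D' + C')·ε, where σ' is applied entrywise. -/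
import Mathlib

open Matrix

attribute [local instance] Matrix.normedAddCommGroup

private lemma sup_norm_mul_le {m k l : ℕ} (P : Matrix (Fin m) (Fin k) ℝ)
    (Q : Matrix (Fin k) (Fin l) ℝ) : ‖P * Q‖ ≤ (k : ℝ) * ‖P‖ * ‖Q‖ := by
  rw [Matrix.norm_le_iff (by positivity)]
  intro i j
  calc ‖(P * Q) i j‖ = |∑ x, P i x * Q x j| := rfl
    _ ≤ ∑ x, |P i x * Q x j| := Finset.abs_sum_le_sum_abs _ _
    _ ≤ ∑ _x : Fin k, ‖P‖ * ‖Q‖ := by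
        refine Finset.sum_le_sum fun x _ => ?_
        rw [abs_mul]
        exact mul_le_mul (P.norm_entry_le_entrywise_sup_norm)
          (Q.norm_entry_le_entrywise_sup_norm) (abs_nonneg _) (norm_nonneg _)
    _ = (k : ℝ) * (‖P‖ * ‖Q‖) := by simp [Finset.sum_const, mul_comm]
    _ = (k : ℝ) * ‖P‖ * ‖Q‖ := by ring

/-- Error bound for one step of the GCN backpropagation rule with approximate
quantities `Z_SG`, `A_SG`, `G_SG`. -/
theorem gcn_backward_step_error_bound {n d : ℕ} {β ρ ε Chat C' D' : ℝ}
    (hβ : 0 ≤ β) (hρ : 0 ≤ ρ) (hε : 0 ≤ ε) (hChat : 0 ≤ Chat) (hC' : 0 ≤ C')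
    (hD' : 0 ≤ D')
    (σ' : ℝ → ℝ) (hσ'bd : ∀ x : ℝ, |σ' x| ≤ β)
    (hσ'lip : ∀ x y : ℝ, |σ' x - σ' y| ≤ ρ * |x - y|)
    (A ASG : Matrix (Fin n) (Fin n) ℝ) (hA : ‖A‖ ≤ β) (hASG : ‖ASG‖ ≤ β)
    (hAdiff : ‖ASG - A‖ ≤ ε)
    (W : Matrix (Fin d) (Fin d) ℝ) (hW : ‖W‖ ≤ β)
    (Z ZSG : Matrix (Fin n) (Fin d) ℝ) (hZdiff : ‖ZSG - Z‖ ≤ Chat * ε)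
    (G GSG : Matrix (Fin n) (Fin d) ℝ) (hGdiff : ‖GSG - G‖ ≤ C' * ε)
    (hG : ‖G‖ ≤ D' * β) (hGSG : ‖GSG‖ ≤ D' * β) :
    ‖Matrix.hadamard (ZSG.map σ') (ASGᵀ * GSG * Wᵀ) -
        Matrix.hadamard (Z.map σ') (Aᵀ * G * Wᵀ)‖ ≤
      (n : ℝ) * d * β ^ 3 * ((ρ * Chat + 1) * D' + C') * ε := by
  have hRHS : (0:ℝ) ≤ (n : ℝ) * d * β ^ 3 * ((ρ * Chat + 1) * D' + C') * ε := by
    have : (0:ℝ) ≤ (ρ * Chat + 1) * D' + C' := by positivity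
    positivity
  rw [Matrix.norm_le_iff hRHS]
  intro i j
  set M1 := ASGᵀ * GSG * Wᵀ
  set M2 := Aᵀ * G * Wᵀ
  -- bound on entries of M1
  have hM1 : ‖M1‖ ≤ (n:ℝ) * d * D' * β ^ 3 := by
    calc ‖M1‖ ≤ (d:ℝ) * ‖ASGᵀ * GSG‖ * ‖Wᵀ‖ := sup_norm_mul_le _ _
      _ ≤ (d:ℝ) * ((n:ℝ) * ‖ASGᵀ‖ * ‖GSG‖) * ‖Wᵀ‖ := by
          have h := sup_norm_mul_le ASGᵀ GSG
          exact mul_le_mul_of_nonneg_right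
            (mul_le_mul_of_nonneg_left h (Nat.cast_nonneg d)) (norm_nonneg _)
      _ ≤ (d:ℝ) * ((n:ℝ) * β * (D' * β)) * β := by
          rw [norm_transpose, norm_transpose]
          have h1 : (0:ℝ) ≤ (n:ℝ) * ‖ASG‖ * ‖GSG‖ := by positivity
          have h2 : (0:ℝ) ≤ (n:ℝ) * β * (D' * β) := by positivity
          gcongr <;> simp [norm_nonneg]
      _ = (n:ℝ) * d * D' * β ^ 3 := by ring
  -- bound on norm of M1 - M2
  have hM12 : ‖M1 - M2‖ ≤ (n:ℝ) * d * (D' + C') * β ^ 2 * ε := by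
    have hdecomp : M1 - M2 = (ASG - A)ᵀ * GSG * Wᵀ + Aᵀ * (GSG - G) * Wᵀ := by
      simp only [M1, M2, Matrix.transpose_sub, Matrix.sub_mul, Matrix.mul_sub]
      abel
    rw [hdecomp]
    calc ‖(ASG - A)ᵀ * GSG * Wᵀ + Aᵀ * (GSG - G) * Wᵀ‖
        ≤ ‖(ASG - A)ᵀ * GSG * Wᵀ‖ + ‖Aᵀ * (GSG - G) * Wᵀ‖ := norm_add_le _ _
      _ ≤ (d:ℝ) * ((n:ℝ) * ε * (D' * β)) * β + (d:ℝ) * ((n:ℝ) * β * (C' * ε)) * β := by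
          gcongr
          · calc ‖(ASG - A)ᵀ * GSG * Wᵀ‖ ≤ (d:ℝ) * ‖(ASG - A)ᵀ * GSG‖ * ‖Wᵀ‖ :=
                sup_norm_mul_le _ _
              _ ≤ (d:ℝ) * ((n:ℝ) * ‖(ASG - A)ᵀ‖ * ‖GSG‖) * ‖Wᵀ‖ := by
                  exact mul_le_mul_of_nonneg_right
                    (mul_le_mul_of_nonneg_left (sup_norm_mul_le _ _) (Nat.cast_nonneg d))
                    (norm_nonneg _)
              _ ≤ (d:ℝ) * ((n:ℝ) * ε * (D' * β)) * β := by
                  rw [norm_transpose, norm_transpose]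
                  have h2 : (0:ℝ) ≤ (n:ℝ) * ε * (D' * β) := by positivity
                  gcongr <;> simp [norm_nonneg]
          · calc ‖Aᵀ * (GSG - G) * Wᵀ‖ ≤ (d:ℝ) * ‖Aᵀ * (GSG - G)‖ * ‖Wᵀ‖ :=
                sup_norm_mul_le _ _
              _ ≤ (d:ℝ) * ((n:ℝ) * ‖Aᵀ‖ * ‖GSG - G‖) * ‖Wᵀ‖ := by
                  exact mul_le_mul_of_nonneg_right
                    (mul_le_mul_of_nonneg_left (sup_norm_mul_le _ _) (Nat.cast_nonneg d))
                    (norm_nonneg _)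
              _ ≤ (d:ℝ) * ((n:ℝ) * β * (C' * ε)) * β := by
                  rw [norm_transpose, norm_transpose]
                  have h2 : (0:ℝ) ≤ (n:ℝ) * β * (C' * ε) := by positivity
                  gcongr <;> simp [norm_nonneg]
      _ = (n:ℝ) * d * (D' + C') * β ^ 2 * ε := by ring
  -- entry decomposition
  have hentry : (Matrix.hadamard (ZSG.map σ') M1 - Matrix.hadamard (Z.map σ') M2) i j
      = (σ' (ZSG i j) - σ' (Z i j)) * M1 i j + σ' (Z i j) * (M1 i j - M2 i j) := by
    simp [Matrix.hadamard, Matrix.sub_apply, Matrix.map_apply]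
    ring
  have hσdiff : |σ' (ZSG i j) - σ' (Z i j)| ≤ ρ * (Chat * ε) := by
    calc |σ' (ZSG i j) - σ' (Z i j)| ≤ ρ * |ZSG i j - Z i j| := hσ'lip _ _
      _ ≤ ρ * (Chat * ε) := by
          have : |ZSG i j - Z i j| ≤ ‖ZSG - Z‖ := by
            have := (ZSG - Z).norm_entry_le_entrywise_sup_norm (i := i) (j := j)
            simpa using this
          exact mul_le_mul_of_nonneg_left (this.trans hZdiff) hρ
  have hM1e : |M1 i j| ≤ (n:ℝ) * d * D' * β ^ 3 :=
    (M1.norm_entry_le_entrywise_sup_norm).trans hM1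
  have hM12e : |M1 i j - M2 i j| ≤ (n:ℝ) * d * (D' + C') * β ^ 2 * ε := by
    have : |(M1 - M2) i j| ≤ ‖M1 - M2‖ := (M1 - M2).norm_entry_le_entrywise_sup_norm
    simpa using this.trans hM12
  calc ‖(Matrix.hadamard (ZSG.map σ') M1 - Matrix.hadamard (Z.map σ') M2) i j‖
      = |(σ' (ZSG i j) - σ' (Z i j)) * M1 i j + σ' (Z i j) * (M1 i j - M2 i j)| := by
        rw [hentry]; rfl
    _ ≤ |(σ' (ZSG i j) - σ' (Z i j)) * M1 i j| + |σ' (Z i j) * (M1 i j - M2 i j)| :=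
        abs_add_le _ _
    _ ≤ (ρ * (Chat * ε)) * ((n:ℝ) * d * D' * β ^ 3)
        + β * ((n:ℝ) * d * (D' + C') * β ^ 2 * ε) := by
        rw [abs_mul, abs_mul]
        exact add_le_add
          (mul_le_mul hσdiff hM1e (abs_nonneg _) (by positivity))
          (mul_le_mul (hσ'bd _) hM12e (abs_nonneg _) hβ)
    _ = (n : ℝ) * d * β ^ 3 * ((ρ * Chat + 1) * D' + C') * ε := by ring
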